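/- Let 𝓚 and 𝓗 be almost malnormal conjugacy-invariant collections of infinite subgroups of a group G with 𝓚 → 𝓗. If 𝓚 has infinitely many G-conjugacy classes of members contained in some fixed H₀ ∈ 𝓗 up to H₀-conjugacy, then 𝓚 has infinitely many G-conjugacy classes. Equivalently, if 𝓚 has finitely many G-conjugacy classes, then for each H ∈ 𝓗 the collection of members of 𝓚 contained in H has finitely many H-conjugacy classes. -/

import Mathlib

open scoped Pointwise

/-- The conjugate subgroup `g H g⁻¹`. -/
def conjSub {G : Type*} [Group G] (g : G) (H : Subgroup G) : Subgroup G :=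
  H.map (MulAut.conj g).toMonoidHom

/-- A collection of subgroups is almost malnormal if all members are infinite,
any two distinct members intersect in a finite set, and every member equals its
normalizer. -/
def AMColl {G : Type*} [Group G] (S : Set (Subgroup G)) : Prop :=
  (∀ H ∈ S, (H : Set G).Infinite) ∧
  (∀ H₁ ∈ S, ∀ H₂ ∈ S, H₁ ≠ H₂ → ((H₁ : Set G) ∩ (H₂ : Set G)).Finite) ∧
  (∀ H ∈ S, Subgroup.normalizer (H : Set G) = H)

/-- Conjugacy invariance of a collection of subgroups. -/
def ConjInv {G : Type*} [Group G] (S : Set (Subgroup G)) : Prop :=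
  ∀ H ∈ S, ∀ g : G, conjSub g H ∈ S

/-- `BlowRel 𝓚 𝓗` (written `𝓚 → 𝓗` in the paper): every member of `𝓚` is
contained in some member of `𝓗`. -/
def BlowRel {G : Type*} [Group G] (K H : Set (Subgroup G)) : Prop :=
  ∀ P ∈ K, ∃ Q ∈ H, P ≤ Q

lemma mem_conjSub {G : Type*} [Group G] {g x : G} {H : Subgroup G} :
    x ∈ conjSub g H ↔ g⁻¹ * x * g ∈ H := by
  simp only [conjSub, Subgroup.mem_map, MulEquiv.coe_toMonoidHom, MulAut.conj_apply]
  constructor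
  · rintro ⟨y, hy, rfl⟩
    have : g⁻¹ * (g * y * g⁻¹) * g = y := by group
    rwa [this]
  · intro h
    exact ⟨g⁻¹ * x * g, h, by group⟩

lemma conjSub_conjSub {G : Type*} [Group G] (a b : G) (H : Subgroup G) :
    conjSub a (conjSub b H) = conjSub (a * b) H := by
  ext x
  simp only [mem_conjSub, mul_inv_rev, mul_assoc]

lemma conjSub_infinite {G : Type*} [Group G] {H : Subgroup G}
    (hH : (H : Set G).Infinite) (g : G) : ((conjSub g H : Subgroup G) : Set G).Infinite := by
  have h1 : ((conjSub g H : Subgroup G) : Set G) = (fun x => g * x * g⁻¹) '' (H : Set G) := by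
    ext x
    simp only [mem_conjSub, Set.mem_image, SetLike.mem_coe]
    constructor
    · intro h
      exact ⟨g⁻¹ * x * g, h, by group⟩
    · rintro ⟨y, hy, rfl⟩
      have : g⁻¹ * (g * y * g⁻¹) * g = y := by group
      rwa [this]
  rw [h1]
  exact hH.image (fun x _ y _ h => by
    have := congrArg (fun z => g⁻¹ * z * g) h
    beta_reduce at this
    have hx : g⁻¹ * (g * x * g⁻¹) * g = x := by group
    have hy : g⁻¹ * (g * y * g⁻¹) * g = y := by group
    rwa [hx, hy] at this)

lemma key_conj_mem {G : Type*} [Group G] {𝓗 : Set (Subgroup G)}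
    (hH : AMColl 𝓗) (hHinv : ConjInv 𝓗) {H : Subgroup G} (hHmem : H ∈ 𝓗)
    {P : Subgroup G} (hPinf : (P : Set G).Infinite)
    (hPH : P ≤ H) {c : G} (hc : conjSub c P ≤ H) : c ∈ H := by
  have hle : P ≤ conjSub c⁻¹ H := by
    intro x hx
    rw [mem_conjSub, inv_inv]
    have h1 : c * x * c⁻¹ ∈ conjSub c P := by
      rw [mem_conjSub]
      have : c⁻¹ * (c * x * c⁻¹) * c = x := by group
      rwa [this]
    exact hc h1
  have heq : conjSub c⁻¹ H = H := by
    by_contra hne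
    have hfin := hH.2.1 _ hHmem _ (hHinv _ hHmem c⁻¹) (Ne.symm hne)
    have hsub : (P : Set G) ⊆ (H : Set G) ∩ (conjSub c⁻¹ H : Set G) :=
      fun x hx => ⟨hPH hx, hle hx⟩
    exact (hPinf.mono hsub) hfin
  have hcn : c ∈ Subgroup.normalizer (H : Set G) := by
    rw [Subgroup.mem_normalizer_iff]
    intro x
    constructor
    · intro hx
      rw [← heq, mem_conjSub, inv_inv] at hx
      exact hx
    · intro hx
      rw [← heq, mem_conjSub, inv_inv]
      exact hx
  rwa [hH.2.2 _ hHmem] at hcn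

theorem stmt_9 {G : Type*} [Group G] {𝓚 𝓗 : Set (Subgroup G)}
    (hK : AMColl 𝓚) (hH : AMColl 𝓗) (hKinv : ConjInv 𝓚) (hHinv : ConjInv 𝓗)
    (hrel : BlowRel 𝓚 𝓗)
    (hfin : ∃ T : Set (Subgroup G), T.Finite ∧ T ⊆ 𝓚 ∧
      ∀ P ∈ 𝓚, ∃ Q ∈ T, ∃ g : G, conjSub g Q = P) :
    ∀ H ∈ 𝓗, ∃ T : Set (Subgroup G), T.Finite ∧
      (∀ Q ∈ T, Q ∈ 𝓚 ∧ Q ≤ H) ∧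
      ∀ P ∈ 𝓚, P ≤ H → ∃ Q ∈ T, ∃ h ∈ H, conjSub h Q = P := by
  classical
  obtain ⟨T₀, hT₀fin, hT₀K, hT₀rep⟩ := hfin
  intro H hHmem
  let f : Subgroup G → Subgroup G := fun Q =>
    if h : ∃ g, conjSub g Q ≤ H then conjSub h.choose Q else ⊥
  refine ⟨f '' {Q ∈ T₀ | ∃ g, conjSub g Q ≤ H},
    (hT₀fin.subset (Set.sep_subset _ _)).image f, ?_, ?_⟩
  · rintro _ ⟨Q, ⟨hQT₀, hgood⟩, rfl⟩
    have hfQ : f Q = conjSub hgood.choose Q := dif_pos hgood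
    rw [hfQ]
    exact ⟨hKinv _ (hT₀K hQT₀) _, hgood.choose_spec⟩
  · intro P hPK hPH
    obtain ⟨Q, hQT₀, g, hg⟩ := hT₀rep P hPK
    have hgood : ∃ g', conjSub g' Q ≤ H := ⟨g, hg ▸ hPH⟩
    have hfQ : f Q = conjSub hgood.choose Q := dif_pos hgood
    have hQK : Q ∈ 𝓚 := hT₀K hQT₀
    have hQinf := hK.1 _ hQK
    have hconj : conjSub (g * hgood.choose⁻¹) (f Q) = P := by
      rw [hfQ, conjSub_conjSub, inv_mul_cancel_right, hg]
    refine ⟨f Q, ⟨Q, ⟨hQT₀, hgood⟩, rfl⟩, g * hgood.choose⁻¹, ?_, hconj⟩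
    refine key_conj_mem (P := f Q) hH hHinv hHmem ?_ ?_ ?_
    · rw [hfQ]; exact conjSub_infinite hQinf _
    · rw [hfQ]; exact hgood.choose_spec
    · rw [hconj]; exact hPH
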